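/- Let \(g\) be a real-valued orientation-preserving \(C^{1+\alpha}\)-diffeomorphism (derivative is \(\alpha\)-Hölder continuous, \(0 < \alpha < 1\)) defined on a neighborhood of \(0 \in \mathbb{R}\) with \(g(0) = 0\) and \(g'(0) = a \neq 1\), \(a > 0\). Then there exists a real-valued orientation-preserving \(C^{1+\alpha}\)-diffeomorphism \(h\) defined on some neighborhood of \(0\) with \(h(0) = 0\), \(h'(0) = 1\), such that \(h(g(x)) = a\,h(x)\) on that neighborhood. -/

import Mathlib

open Set Filter

set_option maxHeartbeats 2000000

private lemma prod_abs_le_exp (u ε : ℕ → ℝ) (h : ∀ k, |u k| ≤ Real.exp (ε k)) (n : ℕ) :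
    |∏ k ∈ Finset.range n, u k| ≤ Real.exp (∑ k ∈ Finset.range n, ε k) := by
  rw [Finset.abs_prod, Real.exp_sum]
  exact Finset.prod_le_prod (fun k _ => abs_nonneg _) (fun k _ => h k)

private lemma prod_sub_prod_le (u v ε : ℕ → ℝ) (hε : ∀ k, 0 ≤ ε k)
    (hu : ∀ k, |u k| ≤ Real.exp (ε k)) (hv : ∀ k, |v k| ≤ Real.exp (ε k)) (n : ℕ) :
    |∏ k ∈ Finset.range n, u k - ∏ k ∈ Finset.range n, v k| ≤
      Real.exp (∑ k ∈ Finset.range n, ε k) * ∑ k ∈ Finset.range n, |u k - v k| := by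
  induction n with
  | zero => simp
  | succ n ih =>
    rw [Finset.prod_range_succ, Finset.prod_range_succ, Finset.sum_range_succ,
      Finset.sum_range_succ]
    have hsplit : (∏ k ∈ Finset.range n, u k) * u n - (∏ k ∈ Finset.range n, v k) * v n
        = (∏ k ∈ Finset.range n, u k) * (u n - v n)
          + (∏ k ∈ Finset.range n, u k - ∏ k ∈ Finset.range n, v k) * v n := by ring
    rw [hsplit]
    have h1 := abs_add_le ((∏ k ∈ Finset.range n, u k) * (u n - v n))
      ((∏ k ∈ Finset.range n, u k - ∏ k ∈ Finset.range n, v k) * v n)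
    rw [abs_mul, abs_mul] at h1
    have e1 : |∏ k ∈ Finset.range n, u k| * |u n - v n|
        ≤ Real.exp (∑ k ∈ Finset.range n, ε k) * |u n - v n| :=
      mul_le_mul_of_nonneg_right (prod_abs_le_exp u ε hu n) (abs_nonneg _)
    have e2 : |∏ k ∈ Finset.range n, u k - ∏ k ∈ Finset.range n, v k| * |v n|
        ≤ (Real.exp (∑ k ∈ Finset.range n, ε k) * ∑ k ∈ Finset.range n, |u k - v k|)
            * Real.exp (ε n) :=
      mul_le_mul ih (hv n) (abs_nonneg _) (by positivity)
    have hen : (1:ℝ) ≤ Real.exp (ε n) := Real.one_le_exp (hε n)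
    have hE : (0:ℝ) < Real.exp (∑ k ∈ Finset.range n, ε k) := Real.exp_pos _
    have hS : (0:ℝ) ≤ ∑ k ∈ Finset.range n, |u k - v k| :=
      Finset.sum_nonneg fun k _ => abs_nonneg _
    rw [Real.exp_add]
    nlinarith [abs_nonneg (u n - v n),
      mul_nonneg (mul_nonneg hE.le (abs_nonneg (u n - v n)))
        (by linarith : (0:ℝ) ≤ Real.exp (ε n) - 1)]

private lemma exp_neg_two_le {ε : ℝ} (h0 : 0 ≤ ε) (h2 : ε ≤ 1/2) :
    Real.exp (-(2*ε)) ≤ 1 - ε := by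
  have h := Real.add_one_le_exp (2*ε)
  have hp := Real.exp_pos (2*ε)
  have hinv : Real.exp (2*ε) * (Real.exp (2*ε))⁻¹ = 1 := mul_inv_cancel₀ hp.ne'
  rw [Real.exp_neg]
  nlinarith [inv_pos.mpr hp]


private lemma key_lin (α a : ℝ) (hα0 : 0 < α) (hα1 : α < 1) (ha : 0 < a) (ha1 : a < 1)
    (U : Set ℝ) (hU : U ∈ nhds (0 : ℝ))
    (g g' : ℝ → ℝ)
    (hderiv : ∀ x ∈ U, HasDerivAt g (g' x) x)
    (c : ℝ) (hc : 0 ≤ c)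
    (hhold : ∀ x ∈ U, ∀ y ∈ U, |g' x - g' y| ≤ c * |x - y| ^ α)
    (hg0 : g 0 = 0) (hg'0 : g' 0 = a) :
    ∃ (V : Set ℝ) (h h' : ℝ → ℝ), V ∈ nhds (0 : ℝ) ∧
      (∀ x ∈ V, HasDerivAt h (h' x) x) ∧
      StrictMonoOn h V ∧
      (∃ c' : ℝ, 0 ≤ c' ∧ ∀ x ∈ V, ∀ y ∈ V, |h' x - h' y| ≤ c' * |x - y| ^ α) ∧
      h 0 = 0 ∧ h' 0 = 1 ∧
      (∀ x ∈ V, h (g x) = a * h x) := by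
  -- exponent bookkeeping
  have h1α : (0:ℝ) < 1 + α := by linarith
  set s : ℝ := (1 + 1/(1+α))/2 with hs_def
  have hs0 : 0 < s := by
    have : 0 < 1/(1+α) := by positivity
    rw [hs_def]; linarith
  have hs1 : s < 1 := by
    have : 1/(1+α) < 1 := by rw [div_lt_one h1α]; linarith
    rw [hs_def]; linarith
  have hs2 : 1 < s * (1+α) := by
    have hne : (1+α) ≠ 0 := ne_of_gt h1α
    have : s * (1+α) = (2+α)/2 := by rw [hs_def]; field_simp; ring
    rw [this]; linarith
  set a' : ℝ := a ^ s with ha'_def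
  have ha'0 : 0 < a' := Real.rpow_pos_of_pos ha s
  have haa' : a < a' := by
    have := Real.rpow_lt_rpow_of_exponent_gt ha ha1 hs1
    rwa [Real.rpow_one] at this
  have ha'1 : a' < 1 := Real.rpow_lt_one ha.le ha1 hs0
  have hkey : a' ^ (1+α) < a := by
    rw [ha'_def, ← Real.rpow_mul ha.le]
    have := Real.rpow_lt_rpow_of_exponent_gt ha ha1 hs2
    rwa [Real.rpow_one] at this
  -- choice of δ
  set ε₀ : ℝ := min (a/2) (a' - a) with hε₀_def
  have hε₀ : 0 < ε₀ := lt_min (by linarith) (by linarith)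
  obtain ⟨r, hr0, hrU⟩ := Metric.mem_nhds_iff.1 hU
  set δ : ℝ := min (r/2) ((ε₀/(c+1)) ^ (1/α : ℝ)) with hδ_def
  have hδ0 : 0 < δ := lt_min (by linarith) (Real.rpow_pos_of_pos (by positivity) _)
  set I : Set ℝ := Icc (-δ) δ with hI_def
  have hIU : I ⊆ U := by
    intro x hx
    apply hrU
    rw [Metric.mem_ball, Real.dist_eq, sub_zero]
    rcases hx with ⟨h1, h2⟩
    have : δ ≤ r/2 := min_le_left _ _
    rw [abs_lt]; constructor <;> linarith
  have h0I : (0:ℝ) ∈ I := by constructor <;> [linarith; linarith]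
  have hδε : c * δ ^ α ≤ ε₀ := by
    have h1 : δ ^ α ≤ ((ε₀/(c+1)) ^ (1/α : ℝ)) ^ α :=
      Real.rpow_le_rpow hδ0.le (min_le_right _ _) hα0.le
    rw [← Real.rpow_mul (by positivity), one_div, inv_mul_cancel₀ (ne_of_gt hα0),
      Real.rpow_one] at h1
    have h2 : c * δ ^ α ≤ c * (ε₀/(c+1)) := mul_le_mul_of_nonneg_left h1 hc
    have h3 : c * (ε₀/(c+1)) ≤ ε₀ := by
      rw [mul_div_assoc', div_le_iff₀ (by positivity : (0:ℝ) < c+1)]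
      nlinarith [hε₀.le]
    linarith
  -- bounds of g' on I
  have rpow_abs_le : ∀ x ∈ I, |x| ^ α ≤ δ ^ α := by
    intro x hx
    exact Real.rpow_le_rpow (abs_nonneg x) (abs_le.2 ⟨hx.1, hx.2⟩) hα0.le
  have F1 : ∀ x ∈ I, |g' x - a| ≤ ε₀ := by
    intro x hx
    have h1 := hhold x (hIU hx) 0 (hIU h0I)
    rw [hg'0, sub_zero] at h1
    have h2 : c * |x| ^ α ≤ c * δ ^ α := mul_le_mul_of_nonneg_left (rpow_abs_le x hx) hc
    linarith
  have F1a : ∀ x ∈ I, a/2 ≤ g' x := by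
    intro x hx
    have h1 := abs_le.1 (F1 x hx)
    have h2 : ε₀ ≤ a/2 := min_le_left _ _
    linarith [h1.1]
  have F1b : ∀ x ∈ I, g' x ≤ a' := by
    intro x hx
    have h1 := abs_le.1 (F1 x hx)
    have h2 : ε₀ ≤ a' - a := min_le_right _ _
    linarith [h1.2]
  have hdI : ∀ x ∈ I, HasDerivAt g (g' x) x := fun x hx => hderiv x (hIU hx)
  have hcontI : ContinuousOn g I := fun x hx => (hdI x hx).continuousAt.continuousWithinAt
  have hdiffI : DifferentiableOn ℝ g (interior I) := fun x hx =>
    ((hdI x (interior_subset hx)).differentiableAt).differentiableWithinAt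
  have hderivI : ∀ x ∈ interior I, deriv g x = g' x := fun x hx =>
    (hdI x (interior_subset hx)).deriv
  have F2u : ∀ x ∈ I, ∀ y ∈ I, x ≤ y → g y - g x ≤ a' * (y - x) := by
    intro x hx y hy hxy
    exact (convex_Icc _ _).image_sub_le_mul_sub_of_deriv_le hcontI hdiffI
      (fun z hz => by rw [hderivI z hz]; exact F1b z (interior_subset hz)) x hx y hy hxy
  have F2l : ∀ x ∈ I, ∀ y ∈ I, x ≤ y → a/2 * (y - x) ≤ g y - g x := by
    intro x hx y hy hxy
    exact (convex_Icc _ _).mul_sub_le_image_sub_of_le_deriv hcontI hdiffI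
      (fun z hz => by rw [hderivI z hz]; exact F1a z (interior_subset hz)) x hx y hy hxy
  have hGlip : ∀ x ∈ I, ∀ y ∈ I, |g x - g y| ≤ a' * |x - y| := by
    intro x hx y hy
    rcases le_total x y with hxy | hxy
    · have h1 := F2u x hx y hy hxy
      have h2 := F2l x hx y hy hxy
      rw [abs_sub_comm, abs_of_nonneg (by nlinarith), abs_sub_comm,
        abs_of_nonneg (by linarith)]
      linarith
    · have h1 := F2u y hy x hx hxy
      have h2 := F2l y hy x hx hxy
      rw [abs_of_nonneg (by nlinarith), abs_of_nonneg (by linarith)]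
      linarith
  have F3 : ∀ x ∈ I, |g x| ≤ a' * |x| := by
    intro x hx
    have := hGlip x hx 0 h0I
    simpa [hg0] using this
  have F3' : ∀ x ∈ I, g x ∈ I := by
    intro x hx
    have h1 := F3 x hx
    have h2 : |x| ≤ δ := abs_le.2 ⟨hx.1, hx.2⟩
    have h3 : |g x| ≤ δ := by nlinarith
    exact ⟨(abs_le.1 h3).1, (abs_le.1 h3).2⟩
  -- refined estimate |g x - a x| ≤ c |x|^α * |x|
  have F4 : ∀ x ∈ I, |g x - a * x| ≤ c * |x| ^ α * |x| := by
    intro x hx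
    have hsub : uIcc (0:ℝ) x ⊆ I := (convex_Icc _ _).ordConnected.uIcc_subset h0I hx
    have habs : ∀ t ∈ uIcc (0:ℝ) x, |t| ≤ |x| := by
      intro t ht
      rcases mem_uIcc.1 ht with ⟨h1, h2⟩ | ⟨h1, h2⟩
      · rw [abs_of_nonneg h1]; exact le_trans h2 (le_abs_self x)
      · rw [abs_of_nonpos h2]; exact le_trans (neg_le_neg h1) (neg_le_abs x)
    have hder : ∀ t ∈ uIcc (0:ℝ) x, HasDerivWithinAt (fun y => g y - a * y)
        (g' t - a) (uIcc (0:ℝ) x) t := by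
      intro t ht
      have h1 : HasDerivAt (fun y => g y - a * y) (g' t - a * 1) t :=
        (hdI t (hsub ht)).sub ((hasDerivAt_id t).const_mul a)
      rw [mul_one] at h1
      exact h1.hasDerivWithinAt
    have hbound : ∀ t ∈ uIcc (0:ℝ) x, ‖g' t - a‖ ≤ c * |x| ^ α := by
      intro t ht
      have h1 := hhold t (hIU (hsub ht)) 0 (hIU h0I)
      rw [hg'0, sub_zero] at h1
      have h2 : |t| ^ α ≤ |x| ^ α := Real.rpow_le_rpow (abs_nonneg t) (habs t ht) hα0.le
      calc ‖g' t - a‖ ≤ c * |t| ^ α := h1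
        _ ≤ c * |x| ^ α := mul_le_mul_of_nonneg_left h2 hc
    have := Convex.norm_image_sub_le_of_norm_hasDerivWithin_le hder hbound (convex_uIcc _ _)
      left_mem_uIcc right_mem_uIcc
    simpa [hg0, Real.norm_eq_abs, abs_sub_comm] using this
  -- iterates
  have I2 : ∀ n : ℕ, g^[n] (0:ℝ) = 0 := fun n => Function.iterate_fixed hg0 n
  have I1 : ∀ x ∈ I, ∀ n : ℕ, g^[n] x ∈ I ∧ |g^[n] x| ≤ a' ^ n * |x| := by
    intro x hx n
    induction n with
    | zero =>
      simp only [Function.iterate_zero_apply, pow_zero, one_mul]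
      exact ⟨hx, le_refl _⟩
    | succ n ih =>
      obtain ⟨hmem, hbd⟩ := ih
      rw [Function.iterate_succ_apply']
      refine ⟨F3' _ hmem, ?_⟩
      have h1 := F3 _ hmem
      have h2 : a' * |g^[n] x| ≤ a' * (a' ^ n * |x|) := mul_le_mul_of_nonneg_left hbd ha'0.le
      calc |g (g^[n] x)| ≤ a' * |g^[n] x| := h1
        _ ≤ a' * (a' ^ n * |x|) := h2
        _ = a' ^ (n+1) * |x| := by ring
  have I3 : ∀ x ∈ I, ∀ n : ℕ, HasDerivAt (fun y => g^[n] y)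
      (∏ k ∈ Finset.range n, g' (g^[k] x)) x := by
    intro x hx n
    induction n with
    | zero => simpa using hasDerivAt_id' x
    | succ n ih =>
      have hmem := (I1 x hx n).1
      have hcomp : HasDerivAt (fun y => g (g^[n] y))
          (g' (g^[n] x) * ∏ k ∈ Finset.range n, g' (g^[k] x)) x :=
        HasDerivAt.comp x (hdI _ hmem) ih
      have heq : (fun y => g^[n+1] y) = fun y => g (g^[n] y) := by
        funext y; rw [Function.iterate_succ_apply']
      have hmc : (∏ k ∈ Finset.range n, g' (g^[k] x)) * g' (g^[n] x)
          = g' (g^[n] x) * ∏ k ∈ Finset.range n, g' (g^[k] x) := mul_comm _ _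
      rw [heq, Finset.prod_range_succ, hmc]
      exact hcomp
  -- geometric data
  set t : ℝ := a' ^ α with ht_def
  have ht0 : 0 < t := Real.rpow_pos_of_pos ha'0 α
  have ht1 : t < 1 := Real.rpow_lt_one ha'0.le ha'1 hα0
  have hpow : ∀ k : ℕ, ((a' ^ k : ℝ)) ^ α = t ^ k := by
    intro k
    rw [ht_def, ← Real.rpow_natCast a' k, ← Real.rpow_natCast (a' ^ (α:ℝ)) k,
      ← Real.rpow_mul ha'0.le, ← Real.rpow_mul ha'0.le, mul_comm]
  set L : ℝ := c * δ ^ α / a with hL_def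
  have hL0 : 0 ≤ L := by positivity
  have hL2 : L ≤ 1/2 := by
    rw [hL_def, div_le_iff₀ ha]
    have h1 : ε₀ ≤ a/2 := min_le_left _ _
    nlinarith
  have Fu : ∀ x ∈ I, ∀ k : ℕ, |g' (g^[k] x) / a - 1| ≤ L * t ^ k := by
    intro x hx k
    obtain ⟨hmem, hbd⟩ := I1 x hx k
    have h1 := hhold _ (hIU hmem) 0 (hIU h0I)
    rw [hg'0, sub_zero] at h1
    have hxδ : |x| ≤ δ := abs_le.2 ⟨hx.1, hx.2⟩
    have h2 : |g^[k] x| ≤ a' ^ k * δ := by nlinarith [pow_pos ha'0 k]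
    have h3 : |g^[k] x| ^ α ≤ ((a' ^ k : ℝ) * δ) ^ α :=
      Real.rpow_le_rpow (abs_nonneg _) h2 hα0.le
    rw [Real.mul_rpow (pow_nonneg ha'0.le k) hδ0.le, hpow k] at h3
    have h4 : |g' (g^[k] x) - a| ≤ c * (t ^ k * δ ^ α) :=
      le_trans h1 (mul_le_mul_of_nonneg_left h3 hc)
    have h5 : g' (g^[k] x) / a - 1 = (g' (g^[k] x) - a) / a := by field_simp
    rw [h5, abs_div, abs_of_pos ha]
    calc |g' (g^[k] x) - a| / a ≤ c * (t ^ k * δ ^ α) / a := by gcongr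
      _ = L * t ^ k := by rw [hL_def]; ring
  have h1t : (0:ℝ) < 1 - t := by linarith
  have hgs : ∀ n : ℕ, ∑ k ∈ Finset.range n, t ^ k ≤ 1/(1-t) := by
    intro n
    have h1 := geom_sum_mul t n
    rw [le_div_iff₀ h1t]; nlinarith [pow_nonneg ht0.le n]
  have hgeom : ∀ n : ℕ, ∑ k ∈ Finset.range n, (L * t ^ k) ≤ L / (1 - t) := by
    intro n
    rw [← Finset.mul_sum]
    calc L * ∑ k ∈ Finset.range n, t ^ k ≤ L * (1/(1-t)) :=
          mul_le_mul_of_nonneg_left (hgs n) hL0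
      _ = L/(1-t) := by ring
  set E : ℝ := L / (1 - t) with hE_def
  have hE0 : 0 ≤ E := div_nonneg hL0 (by linarith)
  set M : ℝ := Real.exp E with hM_def
  have hM1 : 1 ≤ M := Real.one_le_exp hE0
  set q : ℕ → ℝ → ℝ := fun n x => ∏ k ∈ Finset.range n, (g' (g^[k] x) / a) with hq_def
  set f : ℕ → ℝ → ℝ := fun n x => g^[n] x / a ^ n with hf_def
  have hfac_exp : ∀ x ∈ I, ∀ k : ℕ, |g' (g^[k] x) / a| ≤ Real.exp (L * t ^ k) := by
    intro x hx k
    have h1 := Fu x hx k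
    have h2 : |g' (g^[k] x) / a| ≤ 1 + L * t ^ k := by
      have := abs_sub_abs_le_abs_sub (g' (g^[k] x) / a) 1
      rw [abs_one] at this
      linarith
    have h3 : L * t ^ k + 1 ≤ Real.exp (L * t ^ k) := Real.add_one_le_exp _
    linarith
  have Qbound : ∀ x ∈ I, ∀ n : ℕ, |q n x| ≤ M := by
    intro x hx n
    have h1 := prod_abs_le_exp (fun k => g' (g^[k] x) / a) (fun k => L * t ^ k)
      (hfac_exp x hx) n
    calc |q n x| ≤ Real.exp (∑ k ∈ Finset.range n, (L * t ^ k)) := h1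
      _ ≤ M := Real.exp_le_exp.2 (hgeom n)
  have Qlow : ∀ x ∈ I, ∀ n : ℕ, Real.exp (-(2*E)) ≤ q n x := by
    intro x hx n
    have hfac : ∀ k : ℕ, Real.exp (-(2*(L * t ^ k))) ≤ g' (g^[k] x) / a := by
      intro k
      have h1 := Fu x hx k
      have htk : t ^ k ≤ 1 := pow_le_one₀ ht0.le ht1.le
      have hεk : L * t ^ k ≤ 1/2 := by nlinarith
      have h2 := exp_neg_two_le (by positivity) hεk
      have h3 := (abs_le.1 h1).1
      linarith
    have hstep1 : Real.exp (-(2*E)) ≤ ∏ k ∈ Finset.range n, Real.exp (-(2*(L * t ^ k))) := by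
      rw [← Real.exp_sum]
      apply Real.exp_le_exp.2
      have h4 : ∑ k ∈ Finset.range n, -(2*(L * t ^ k))
          = -(2 * ∑ k ∈ Finset.range n, (L * t ^ k)) := by
        rw [Finset.mul_sum, ← Finset.sum_neg_distrib]
      rw [h4]
      have := hgeom n
      linarith
    exact le_trans hstep1 (Finset.prod_le_prod (fun k _ => (Real.exp_pos _).le)
      (fun k _ => hfac k))
  -- derivative of f n
  have hfd : ∀ x ∈ I, ∀ n : ℕ, HasDerivAt (f n) (q n x) x := by
    intro x hx n
    have h1 := (I3 x hx n).div_const (a ^ n)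
    have h2 : (∏ k ∈ Finset.range n, g' (g^[k] x)) / a ^ n = q n x := by
      rw [hq_def]
      simp only
      rw [Finset.prod_div_distrib, Finset.prod_const, Finset.card_range]
    rw [hf_def]
    simp only
    exact h2 ▸ h1
  -- Cauchy for q
  have hapow : ∀ n : ℕ, (0:ℝ) < a ^ n := fun n => pow_pos ha n
  have hqCauchy : ∀ x ∈ I, ∀ n : ℕ, dist (q n x) (q (n+1) x) ≤ (M * L) * t ^ n := by
    intro x hx n
    have h1 : q (n+1) x = q n x * (g' (g^[n] x) / a) := by
      rw [hq_def]; simp only; rw [Finset.prod_range_succ]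
    rw [Real.dist_eq, h1]
    have h2 : q n x - q n x * (g' (g^[n] x) / a) = q n x * (1 - g' (g^[n] x) / a) := by ring
    rw [h2, abs_mul]
    have h3 : |1 - g' (g^[n] x) / a| ≤ L * t ^ n := by
      rw [abs_sub_comm]; exact Fu x hx n
    have h4 := Qbound x hx n
    calc |q n x| * |1 - g' (g^[n] x) / a| ≤ M * (L * t ^ n) :=
          mul_le_mul h4 h3 (abs_nonneg _) (by linarith)
      _ = (M * L) * t ^ n := by ring
  -- Cauchy for f
  set r : ℝ := t * a' / a with hr_def
  have hr0 : 0 < r := by positivity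
  have hr1 : r < 1 := by
    rw [hr_def, div_lt_one ha, ht_def]
    calc a' ^ α * a' = a' ^ (α + 1) := by
          rw [Real.rpow_add_one ha'0.ne']
      _ = a' ^ (1 + α) := by rw [add_comm]
      _ < a := hkey
  set C1 : ℝ := c * δ ^ α * δ / a with hC1_def
  have hC10 : 0 ≤ C1 := by positivity
  have hfCauchy : ∀ x ∈ I, ∀ n : ℕ, dist (f n x) (f (n+1) x) ≤ C1 * r ^ n := by
    intro x hx n
    obtain ⟨hmem, hbd⟩ := I1 x hx n
    have hxδ : |x| ≤ δ := abs_le.2 ⟨hx.1, hx.2⟩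
    have h2 : |g^[n] x| ≤ a' ^ n * δ := by nlinarith [pow_pos ha'0 n]
    have h3 : |g^[n] x| ^ α ≤ t ^ n * δ ^ α := by
      have := Real.rpow_le_rpow (abs_nonneg _) h2 hα0.le
      rwa [Real.mul_rpow (pow_nonneg ha'0.le n) hδ0.le, hpow n] at this
    have h4 := F4 _ hmem
    have h5 : |g (g^[n] x) - a * g^[n] x| ≤ c * (t ^ n * δ ^ α) * (a' ^ n * δ) := by
      have hr1' : (0:ℝ) ≤ |g^[n] x| := abs_nonneg _
      have hr2' : (0:ℝ) ≤ c * |g^[n] x| ^ α :=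
        mul_nonneg hc (Real.rpow_nonneg hr1' α)
      calc |g (g^[n] x) - a * g^[n] x| ≤ c * |g^[n] x| ^ α * |g^[n] x| := h4
        _ ≤ c * (t ^ n * δ ^ α) * (a' ^ n * δ) := by
            apply mul_le_mul (mul_le_mul_of_nonneg_left h3 hc) h2 hr1'
            positivity
    have h6 : f (n+1) x - f n x = (g (g^[n] x) - a * g^[n] x) / a ^ (n+1) := by
      rw [hf_def]
      simp only
      rw [Function.iterate_succ_apply']
      field_simp
      ring
    rw [dist_comm, Real.dist_eq, h6, abs_div, abs_of_pos (hapow (n+1)), div_le_iff₀ (hapow (n+1))]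
    calc |g (g^[n] x) - a * g^[n] x| ≤ c * (t ^ n * δ ^ α) * (a' ^ n * δ) := h5
      _ = C1 * r ^ n * a ^ (n+1) := by
          rw [hC1_def, hr_def, div_pow, mul_pow, pow_succ]
          field_simp
  -- limits
  set h' : ℝ → ℝ := fun x => limUnder atTop (fun n => q n x) with hh'_def
  set h : ℝ → ℝ := fun x => limUnder atTop (fun n => f n x) with hh_def
  have htq : ∀ x ∈ I, Tendsto (fun n => q n x) atTop (nhds (h' x)) := by
    intro x hx
    exact (cauchySeq_of_le_geometric t (M*L) ht1 (hqCauchy x hx)).tendsto_limUnder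
  have htf : ∀ x ∈ I, Tendsto (fun n => f n x) atTop (nhds (h x)) := by
    intro x hx
    exact (cauchySeq_of_le_geometric r C1 hr1 (hfCauchy x hx)).tendsto_limUnder
  -- uniform convergence of derivatives on the open interval
  set V : Set ℝ := Ioo (-δ) δ with hV_def
  have hVI : V ⊆ I := Ioo_subset_Icc_self
  have hunif : TendstoUniformlyOn (fun n x => q n x) h' atTop V := by
    rw [Metric.tendstoUniformlyOn_iff]
    intro ε hε
    have hto : Tendsto (fun n : ℕ => (M * L) / (1 - t) * t ^ n) atTop (nhds 0) := by
      have := tendsto_pow_atTop_nhds_zero_of_lt_one ht0.le ht1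
      simpa using this.const_mul ((M * L) / (1 - t))
    have hev : ∀ᶠ n in atTop, (M * L) / (1 - t) * t ^ n < ε :=
      hto.eventually_lt_const hε
    filter_upwards [hev] with n hn x hx
    have h1 := dist_le_of_le_geometric_of_tendsto t (M*L) ht1 (hqCauchy x (hVI hx))
      (htq x (hVI hx)) n
    rw [dist_comm] at h1
    calc dist (h' x) (q n x) ≤ (M * L) * t ^ n / (1 - t) := h1
      _ = (M * L) / (1 - t) * t ^ n := by ring
      _ < ε := hn
  have hhd : ∀ x ∈ V, HasDerivAt h (h' x) x := by
    intro x hx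
    exact hasDerivAt_of_tendstoUniformlyOn isOpen_Ioo hunif
      (Eventually.of_forall (fun n y hy => hfd y (hVI hy) n))
      (fun y hy => htf y (hVI hy)) hx
  -- Lipschitz bound for iterates
  have Ilip : ∀ x ∈ I, ∀ y ∈ I, ∀ n : ℕ, |g^[n] x - g^[n] y| ≤ a' ^ n * |x - y| := by
    intro x hx y hy n
    induction n with
    | zero => simp
    | succ n ih =>
      rw [Function.iterate_succ_apply', Function.iterate_succ_apply']
      calc |g (g^[n] x) - g (g^[n] y)| ≤ a' * |g^[n] x - g^[n] y| :=
            hGlip _ (I1 x hx n).1 _ (I1 y hy n).1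
        _ ≤ a' * (a' ^ n * |x - y|) := mul_le_mul_of_nonneg_left ih ha'0.le
        _ = a' ^ (n+1) * |x - y| := by ring
  -- Hölder bound for q and h'
  set CH : ℝ := M * ((c/a) * (1/(1-t))) with hCH_def
  have hCH0 : 0 ≤ CH := by
    apply mul_nonneg (Real.exp_pos _).le
    apply mul_nonneg (div_nonneg hc ha.le)
    positivity
  have Hq : ∀ x ∈ I, ∀ y ∈ I, ∀ n : ℕ, |q n x - q n y| ≤ CH * |x - y| ^ α := by
    intro x hx y hy n
    have h1 := prod_sub_prod_le (fun k => g' (g^[k] x)/a) (fun k => g' (g^[k] y)/a)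
      (fun k => L * t ^ k) (fun k => by positivity) (hfac_exp x hx) (hfac_exp y hy) n
    have h2 : ∀ k : ℕ, |g' (g^[k] x)/a - g' (g^[k] y)/a|
        ≤ (c/a) * |x - y| ^ α * t ^ k := by
      intro k
      have hl := Ilip x hx y hy k
      have ha1' := hhold _ (hIU (I1 x hx k).1) _ (hIU (I1 y hy k).1)
      have h3 : |g^[k] x - g^[k] y| ^ α ≤ t ^ k * |x - y| ^ α := by
        have := Real.rpow_le_rpow (abs_nonneg _) hl hα0.le
        rwa [Real.mul_rpow (pow_nonneg ha'0.le k) (abs_nonneg _), hpow k] at this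
      have h4 : g' (g^[k] x)/a - g' (g^[k] y)/a = (g' (g^[k] x) - g' (g^[k] y))/a := by
        ring
      rw [h4, abs_div, abs_of_pos ha]
      calc |g' (g^[k] x) - g' (g^[k] y)| / a ≤ c * (t ^ k * |x - y| ^ α) / a := by
            have h9 : |g' (g^[k] x) - g' (g^[k] y)| ≤ c * (t ^ k * |x - y| ^ α) :=
              le_trans ha1' (mul_le_mul_of_nonneg_left h3 hc)
            gcongr
        _ = (c/a) * |x - y| ^ α * t ^ k := by ring
    have h5 : ∑ k ∈ Finset.range n, |g' (g^[k] x)/a - g' (g^[k] y)/a|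
        ≤ (c/a) * |x - y| ^ α * (1/(1-t)) := by
      have h6 := Finset.sum_le_sum (fun k _ => h2 k)
        (s := Finset.range n)
      rw [← Finset.mul_sum] at h6
      have h7 : (c/a) * |x - y| ^ α * ∑ k ∈ Finset.range n, t ^ k
          ≤ (c/a) * |x - y| ^ α * (1/(1-t)) := by
        apply mul_le_mul_of_nonneg_left (hgs n)
        positivity
      exact le_trans h6 h7
    have h8 : Real.exp (∑ k ∈ Finset.range n, (L * t ^ k)) ≤ M :=
      Real.exp_le_exp.2 (hgeom n)
    calc |q n x - q n y| ≤ Real.exp (∑ k ∈ Finset.range n, (L * t ^ k))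
          * ∑ k ∈ Finset.range n, |g' (g^[k] x)/a - g' (g^[k] y)/a| := h1
      _ ≤ M * ((c/a) * |x - y| ^ α * (1/(1-t))) := by
          apply mul_le_mul h8 h5 (Finset.sum_nonneg fun k _ => abs_nonneg _)
          exact le_trans zero_le_one hM1
      _ = CH * |x - y| ^ α := by rw [hCH_def]; ring
  have Hh : ∀ x ∈ I, ∀ y ∈ I, |h' x - h' y| ≤ CH * |x - y| ^ α := by
    intro x hx y hy
    have h1 : Tendsto (fun n => |q n x - q n y|) atTop (nhds (|h' x - h' y|)) :=
      ((htq x hx).sub (htq y hy)).abs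
    exact le_of_tendsto h1 (Eventually.of_forall (fun n => Hq x hx y hy n))
  have Hlow : ∀ x ∈ I, Real.exp (-(2*E)) ≤ h' x := fun x hx =>
    ge_of_tendsto (htq x hx) (Eventually.of_forall (Qlow x hx))
  have hh0 : h 0 = 0 := by
    have h1 : (fun n => f n 0) = fun n : ℕ => (0:ℝ) := by
      funext n; rw [hf_def]; simp [I2 n]
    have h2 := htf 0 h0I
    rw [h1] at h2
    exact tendsto_nhds_unique h2 tendsto_const_nhds
  have hh'0 : h' 0 = 1 := by
    have h1 : (fun n => q n 0) = fun n : ℕ => (1:ℝ) := by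
      funext n; rw [hq_def]; simp only
      rw [Finset.prod_eq_one]
      intro k _
      rw [I2 k, hg'0, div_self ha.ne']
    have h2 := htq 0 h0I
    rw [h1] at h2
    exact tendsto_nhds_unique h2 tendsto_const_nhds
  have hmonoh : StrictMonoOn h V := by
    apply strictMonoOn_of_deriv_pos (convex_Ioo _ _)
      (fun x hx => (hhd x hx).continuousAt.continuousWithinAt)
    intro x hx
    rw [interior_Ioo] at hx
    rw [(hhd x hx).deriv]
    exact lt_of_lt_of_le (Real.exp_pos _) (Hlow x (hVI hx))
  have hfeq : ∀ x ∈ V, h (g x) = a * h x := by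
    intro x hx
    have hxI := hVI hx
    have hgI := F3' x hxI
    have h1 : ∀ n : ℕ, f n (g x) = a * f (n+1) x := by
      intro n
      rw [hf_def]; simp only
      rw [← Function.iterate_succ_apply g n x, pow_succ]
      field_simp
    have h2 : Tendsto (fun n => f n (g x)) atTop (nhds (h (g x))) := htf _ hgI
    have h3 : Tendsto (fun n => f (n+1) x) atTop (nhds (h x)) :=
      (htf x hxI).comp (tendsto_add_atTop_nat 1)
    have h4 : Tendsto (fun n => a * f (n+1) x) atTop (nhds (a * h x)) := h3.const_mul a
    have h5 : (fun n => f n (g x)) = fun n => a * f (n+1) x := funext h1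
    rw [h5] at h2
    exact tendsto_nhds_unique h2 h4
  refine ⟨V, h, h', ?_, hhd, hmonoh,
    ⟨CH, hCH0, fun x hx y hy => Hh x (hVI hx) y (hVI hy)⟩, hh0, hh'0, hfeq⟩
  rw [hV_def]
  exact Ioo_mem_nhds (by linarith) hδ0

/-- The `C^{1+α}` Sternberg linearization theorem (existence part): if `g` is a real-valued
orientation-preserving diffeomorphism of a neighborhood of `0` whose derivative `g'` is
`α`-Hölder continuous, with `g 0 = 0` and `g' 0 = a` where `a > 0`, `a ≠ 1`, then there is
an orientation-preserving `C^{1+α}`-diffeomorphism `h` of some neighborhood of `0` with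
`h 0 = 0`, `h' 0 = 1` and `h (g x) = a * h x` on that neighborhood. -/
theorem stmt_2 (α a : ℝ) (hα : α ∈ Ioo (0 : ℝ) 1) (ha : 0 < a) (hane : a ≠ 1)
    (U : Set ℝ) (hU : U ∈ nhds (0 : ℝ))
    (g g' : ℝ → ℝ)
    (hderiv : ∀ x ∈ U, HasDerivAt g (g' x) x)
    (hmono : StrictMonoOn g U)
    (hhold : ∃ c : ℝ, 0 ≤ c ∧ ∀ x ∈ U, ∀ y ∈ U, |g' x - g' y| ≤ c * |x - y| ^ α)
    (hg0 : g 0 = 0) (hg'0 : g' 0 = a) :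
    ∃ (V : Set ℝ) (h h' : ℝ → ℝ), V ∈ nhds (0 : ℝ) ∧
      (∀ x ∈ V, HasDerivAt h (h' x) x) ∧
      StrictMonoOn h V ∧
      (∃ c : ℝ, 0 ≤ c ∧ ∀ x ∈ V, ∀ y ∈ V, |h' x - h' y| ≤ c * |x - y| ^ α) ∧
      h 0 = 0 ∧ h' 0 = 1 ∧
      (∀ x ∈ V, h (g x) = a * h x) := by
  obtain ⟨hα0, hα1⟩ := hα
  obtain ⟨c, hc, hhold⟩ := hhold
  rcases lt_or_gt_of_ne hane with ha1 | ha1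
  · exact key_lin α a hα0 hα1 ha ha1 U hU g g' hderiv c hc hhold hg0 hg'0
  · -- a > 1: construct a local inverse of g and apply the contraction case to it
    obtain ⟨ρ, hρ0, hρU⟩ := Metric.mem_nhds_iff.1 hU
    set δ : ℝ := min (ρ/2) ((a/(2*(c+1))) ^ (1/α : ℝ)) with hδ_def
    have hδ0 : 0 < δ := lt_min (by linarith) (Real.rpow_pos_of_pos (by positivity) _)
    set I : Set ℝ := Icc (-δ) δ with hI_def
    have hIU : I ⊆ U := by
      intro x hx
      apply hρU
      rw [Metric.mem_ball, Real.dist_eq, sub_zero]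
      rcases hx with ⟨h1, h2⟩
      have : δ ≤ ρ/2 := min_le_left _ _
      rw [abs_lt]; constructor <;> linarith
    have h0I : (0:ℝ) ∈ I := by constructor <;> [linarith; linarith]
    have hδε : c * δ ^ α ≤ a/2 := by
      have h1 : δ ^ α ≤ ((a/(2*(c+1))) ^ (1/α : ℝ)) ^ α :=
        Real.rpow_le_rpow hδ0.le (min_le_right _ _) hα0.le
      rw [← Real.rpow_mul (by positivity), one_div, inv_mul_cancel₀ (ne_of_gt hα0),
        Real.rpow_one] at h1
      have h2 : c * δ ^ α ≤ c * (a/(2*(c+1))) := mul_le_mul_of_nonneg_left h1 hc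
      have h3 : c * (a/(2*(c+1))) ≤ a/2 := by
        rw [mul_div_assoc', div_le_div_iff₀ (by positivity) (by positivity)]
        nlinarith
      linarith
    have rpow_abs_le : ∀ x ∈ I, |x| ^ α ≤ δ ^ α := by
      intro x hx
      exact Real.rpow_le_rpow (abs_nonneg x) (abs_le.2 ⟨hx.1, hx.2⟩) hα0.le
    have F1a : ∀ x ∈ I, a/2 ≤ g' x := by
      intro x hx
      have h1 := hhold x (hIU hx) 0 (hIU h0I)
      rw [hg'0, sub_zero] at h1
      have h2 : c * |x| ^ α ≤ c * δ ^ α := mul_le_mul_of_nonneg_left (rpow_abs_le x hx) hc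
      have h3 := (abs_le.1 (le_trans h1 h2)).1
      linarith [le_trans h1 h2, hδε, (abs_le.1 (h1.trans h2)).1]
    have hdI : ∀ x ∈ I, HasDerivAt g (g' x) x := fun x hx => hderiv x (hIU hx)
    have hcontI : ContinuousOn g I := fun x hx => (hdI x hx).continuousAt.continuousWithinAt
    have hdiffI : DifferentiableOn ℝ g (interior I) := fun x hx =>
      ((hdI x (interior_subset hx)).differentiableAt).differentiableWithinAt
    have F2l : ∀ x ∈ I, ∀ y ∈ I, x ≤ y → a/2 * (y - x) ≤ g y - g x := by
      intro x hx y hy hxy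
      exact (convex_Icc _ _).mul_sub_le_image_sub_of_le_deriv hcontI hdiffI
        (fun z hz => by rw [(hdI z (interior_subset hz)).deriv]
                        exact F1a z (interior_subset hz)) x hx y hy hxy
    have hb1 : g (-δ) < 0 := by
      have := F2l (-δ) (by constructor <;> linarith) 0 h0I (by linarith)
      rw [hg0] at this
      nlinarith
    have hb2 : 0 < g δ := by
      have := F2l 0 h0I δ (by constructor <;> linarith) (by linarith)
      rw [hg0] at this
      nlinarith
    set J : Set ℝ := Ioo (g (-δ)) (g δ) with hJ_def
    have hJ0 : (0:ℝ) ∈ J := ⟨hb1, hb2⟩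
    have hopenJ : IsOpen J := isOpen_Ioo
    have hJim : Icc (g (-δ)) (g δ) ⊆ g '' I :=
      intermediate_value_Icc (by linarith : -δ ≤ δ) hcontI
    set f : ℝ → ℝ := Function.invFunOn g I with hf_def
    have hinj : InjOn g I := (hmono.mono hIU).injOn
    have hf : ∀ y ∈ J, f y ∈ I ∧ g (f y) = y := by
      intro y hy
      have hex : ∃ x ∈ I, g x = y := by
        obtain ⟨x, hxI, hgx⟩ := hJim (Ioo_subset_Icc_self hy)
        exact ⟨x, hxI, hgx⟩
      exact ⟨Function.invFunOn_mem hex, Function.invFunOn_eq hex⟩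
    have hlip : ∀ y1 ∈ J, ∀ y2 ∈ J, |f y1 - f y2| ≤ (2/a) * |y1 - y2| := by
      intro y1 h1 y2 h2
      obtain ⟨hm1, he1⟩ := hf y1 h1
      obtain ⟨hm2, he2⟩ := hf y2 h2
      rcases le_total (f y1) (f y2) with hle | hle
      · have h3 := F2l _ hm1 _ hm2 hle
        rw [he1, he2] at h3
        have hy21 : 0 ≤ y2 - y1 := by nlinarith
        rw [abs_sub_comm, abs_of_nonneg (by linarith : (0:ℝ) ≤ f y2 - f y1),
          abs_sub_comm, abs_of_nonneg hy21]
        have h4 := mul_le_mul_of_nonneg_left h3 (by positivity : (0:ℝ) ≤ 2/a)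
        have h5 : 2/a * (a/2 * (f y2 - f y1)) = f y2 - f y1 := by field_simp
        rw [h5] at h4
        exact h4
      · have h3 := F2l _ hm2 _ hm1 hle
        rw [he1, he2] at h3
        have hy21 : 0 ≤ y1 - y2 := by nlinarith
        rw [abs_of_nonneg (by linarith : (0:ℝ) ≤ f y1 - f y2), abs_of_nonneg hy21]
        have h4 := mul_le_mul_of_nonneg_left h3 (by positivity : (0:ℝ) ≤ 2/a)
        have h5 : 2/a * (a/2 * (f y1 - f y2)) = f y1 - f y2 := by field_simp
        rw [h5] at h4
        exact h4
    have hlipW : LipschitzOnWith (Real.toNNReal (2/a)) f J := by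
      apply LipschitzOnWith.of_dist_le_mul
      intro y1 h1 y2 h2
      rw [Real.dist_eq, Real.dist_eq, Real.coe_toNNReal _ (by positivity)]
      exact hlip y1 h1 y2 h2
    have hfcont : ContinuousOn f J := hlipW.continuousOn
    have hfd : ∀ y ∈ J, HasDerivAt f (g' (f y))⁻¹ y := by
      intro y hy
      apply HasDerivAt.of_local_left_inverse (hfcont.continuousAt (hopenJ.mem_nhds hy))
        (hderiv (f y) (hIU (hf y hy).1))
        (ne_of_gt (lt_of_lt_of_le (by positivity) (F1a _ (hf y hy).1)))
      filter_upwards [hopenJ.mem_nhds hy] with z hz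
      exact (hf z hz).2
    have hf0 : f 0 = 0 := hinj (hf 0 hJ0).1 h0I ((hf 0 hJ0).2.trans hg0.symm)
    have hf'0 : (g' (f 0))⁻¹ = a⁻¹ := by rw [hf0, hg'0]
    set cf : ℝ := c * (2/a) ^ (α:ℝ) * (4/(a*a)) with hcf_def
    have hcf0 : 0 ≤ cf := by positivity
    have hfhold : ∀ y1 ∈ J, ∀ y2 ∈ J,
        |(g' (f y1))⁻¹ - (g' (f y2))⁻¹| ≤ cf * |y1 - y2| ^ α := by
      intro y1 h1 y2 h2
      obtain ⟨hm1, _⟩ := hf y1 h1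
      obtain ⟨hm2, _⟩ := hf y2 h2
      have hp1 : a/2 ≤ g' (f y1) := F1a _ hm1
      have hp2 : a/2 ≤ g' (f y2) := F1a _ hm2
      have hp1' : (0:ℝ) < g' (f y1) := lt_of_lt_of_le (by positivity) hp1
      have hp2' : (0:ℝ) < g' (f y2) := lt_of_lt_of_le (by positivity) hp2
      have hnum : |g' (f y2) - g' (f y1)| ≤ c * (2/a) ^ (α:ℝ) * |y1 - y2| ^ α := by
        have h3 := hhold _ (hIU hm2) _ (hIU hm1)
        have h4 : |f y2 - f y1| ^ α ≤ ((2/a) * |y1 - y2|) ^ α := by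
          apply Real.rpow_le_rpow (abs_nonneg _) ?_ hα0.le
          rw [abs_sub_comm]
          exact hlip y1 h1 y2 h2
        rw [Real.mul_rpow (by positivity) (abs_nonneg _)] at h4
        calc |g' (f y2) - g' (f y1)| ≤ c * |f y2 - f y1| ^ α := h3
          _ ≤ c * ((2/a) ^ (α:ℝ) * |y1 - y2| ^ α) := mul_le_mul_of_nonneg_left h4 hc
          _ = c * (2/a) ^ (α:ℝ) * |y1 - y2| ^ α := by ring
      have hdiff : (g' (f y1))⁻¹ - (g' (f y2))⁻¹
          = (g' (f y2) - g' (f y1)) / (g' (f y1) * g' (f y2)) := by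
        field_simp
      rw [hdiff, abs_div, abs_of_pos (mul_pos hp1' hp2')]
      have hden : a/2 * (a/2) ≤ g' (f y1) * g' (f y2) := by nlinarith
      calc |g' (f y2) - g' (f y1)| / (g' (f y1) * g' (f y2))
          ≤ (c * (2/a) ^ (α:ℝ) * |y1 - y2| ^ α) / (a/2 * (a/2)) := by
            exact div_le_div₀ (by positivity) hnum (by positivity) hden
        _ = cf * |y1 - y2| ^ α := by rw [hcf_def]; field_simp; ring
    have hainv0 : (0:ℝ) < a⁻¹ := by positivity
    have hainv1 : a⁻¹ < 1 := by
      rw [inv_lt_one_iff₀]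
      right; exact ha1
    obtain ⟨V, h, h', hV, hdV, hmonoV, hhV, hh0, hh'1, heq⟩ :=
      key_lin α a⁻¹ hα0 hα1 hainv0 hainv1 J (hopenJ.mem_nhds hJ0) f
        (fun y => (g' (f y))⁻¹) hfd cf hcf0 hfhold hf0 hf'0
    set W : Set ℝ := V ∩ g ⁻¹' (V ∩ J) ∩ Ioo (-δ) δ with hW_def
    have hgc : ContinuousAt g 0 := (hderiv 0 (mem_of_mem_nhds hU)).continuousAt
    have hWnhds : W ∈ nhds (0:ℝ) := by
      apply Filter.inter_mem (Filter.inter_mem hV ?_) (Ioo_mem_nhds (by linarith) hδ0)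
      apply hgc.preimage_mem_nhds
      rw [hg0]
      exact Filter.inter_mem hV (hopenJ.mem_nhds hJ0)
    refine ⟨W, h, h', hWnhds, fun x hx => hdV x hx.1.1,
      hmonoV.mono (fun x hx => hx.1.1), ?_, hh0, hh'1, ?_⟩
    · obtain ⟨c', hc', hch⟩ := hhV
      exact ⟨c', hc', fun x hx y hy => hch x hx.1.1 y hy.1.1⟩
    · intro x hx
      obtain ⟨⟨hxV, hxg⟩, hxIo⟩ := hx
      obtain ⟨hgxV, hgxJ⟩ := hxg
      have hxI' : x ∈ I := Ioo_subset_Icc_self hxIo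
      obtain ⟨hfgI, hgfg⟩ := hf (g x) hgxJ
      have hfg : f (g x) = x := hinj hfgI hxI' hgfg
      have h6 := heq (g x) hgxV
      rw [hfg] at h6
      rw [h6]
      field_simp
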